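/- Let R be a local commutative ring with maximal ideal m such that m is the unique nonzero proper ideal of R (in particular R is not a field). Then m is principal, m² = 0, and m is a strongly Gorenstein projective R-module. -/

import Mathlib

open CategoryTheory

universe u

/-- `Extⁿ_R(M, N) = 0`, using Mathlib's `Ext` functor on `ModuleCat R`. -/
def extVanishes (R : Type u) [CommRing R] (n : ℕ) (M N : Type u) [AddCommGroup M] [Module R M]
    [AddCommGroup N] [Module R N] : Prop :=
  Subsingleton (((Ext R (ModuleCat.{u} R) n).obj (Opposite.op (ModuleCat.of R M))).obj
    (ModuleCat.of R N))

/-- An `R`-module `M` is strongly Gorenstein projective if there is a short exact sequence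
`0 → M → P → M → 0` with `P` projective, and `Ext¹_R(M, Q) = 0` for every projective `Q`. -/
def IsStronglyGorensteinProjective (R : Type u) [CommRing R] (M : Type u) [AddCommGroup M]
    [Module R M] : Prop :=
  (∃ (P : ModuleCat.{u} R) (f : M →ₗ[R] P) (g : P →ₗ[R] M),
      Module.Projective R P ∧ Function.Injective f ∧ Function.Surjective g ∧
      LinearMap.range f = LinearMap.ker g) ∧
  ∀ Q : ModuleCat.{u} R, Module.Projective R Q → extVanishes R 1 M Q

/-- An `R`-module is Gorenstein projective if it is a direct summand of a strongly Gorenstein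
projective module. -/
def IsGorensteinProjective (R : Type u) [CommRing R] (M : Type u) [AddCommGroup M]
    [Module R M] : Prop :=
  ∃ (N : ModuleCat.{u} R) (i : M →ₗ[R] N) (r : N →ₗ[R] M),
    IsStronglyGorensteinProjective R N ∧ r ∘ₗ i = LinearMap.id

/-- An `R`-module `M` is strongly Gorenstein injective if there is a short exact sequence
`0 → M → E → M → 0` with `E` injective, and `Ext¹_R(Q, M) = 0` for every injective `Q`. -/
def IsStronglyGorensteinInjective (R : Type u) [CommRing R] (M : Type u) [AddCommGroup M]
    [Module R M] : Prop :=
  (∃ (E : ModuleCat.{u} R) (f : M →ₗ[R] E) (g : E →ₗ[R] M),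
      Module.Injective R E ∧ Function.Injective f ∧ Function.Surjective g ∧
      LinearMap.range f = LinearMap.ker g) ∧
  ∀ Q : ModuleCat.{u} R, Module.Injective R Q → extVanishes R 1 Q M

/-- An `R`-module is Gorenstein injective if it is a direct summand of a strongly Gorenstein
injective module. -/
def IsGorensteinInjective (R : Type u) [CommRing R] (M : Type u) [AddCommGroup M]
    [Module R M] : Prop :=
  ∃ (N : ModuleCat.{u} R) (i : M →ₗ[R] N) (r : N →ₗ[R] M),
    IsStronglyGorensteinInjective R N ∧ r ∘ₗ i = LinearMap.id

/-- A ring is G-semisimple if every module over it is Gorenstein projective. -/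
def GSemisimple (R : Type u) [CommRing R] : Prop :=
  ∀ M : ModuleCat.{u} R, IsGorensteinProjective R M

/-- A ring is SG-semisimple if every module over it is strongly Gorenstein projective. -/
def SGSemisimple (R : Type u) [CommRing R] : Prop :=
  ∀ M : ModuleCat.{u} R, IsStronglyGorensteinProjective R M


section Aux

open CategoryTheory Limits

variable {R : Type u} [CommRing R]

lemma subsingleton_of_isZero {X : ModuleCat.{u} R} (h : IsZero X) : Subsingleton X := by
  have h0 : (𝟙 X : X ⟶ X) = 0 := (IsZero.iff_id_eq_zero X).1 h
  refine ⟨fun a b => ?_⟩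
  have ha : (𝟙 X : X ⟶ X) a = (0 : X ⟶ X) a := by rw [h0]
  have hb : (𝟙 X : X ⟶ X) b = (0 : X ⟶ X) b := by rw [h0]
  exact (ha.trans hb.symm : a = b)

lemma extVanishes_free (x : R) (hx2 : x * x = 0)
    (hann : ∀ r : R, x * r = 0 → ∃ a : R, x * a = r)
    (M : Type u) [AddCommGroup M] [Module R M]
    (g : R →ₗ[R] M) (hgsurj : Function.Surjective g)
    (hgx : ∀ a : R, g (x * a) = 0)
    (hgker : ∀ r : R, g r = 0 → ∃ a : R, x * a = r)
    (ι : Type u) :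
    extVanishes R 1 M (ι →₀ R) := by
  classical
  -- the differential: multiplication by x
  set δ : ModuleCat.of R R ⟶ ModuleCat.of R R := ModuleCat.ofHom (LinearMap.lsmul R R x) with hδ
  have hδδ : δ ≫ δ = 0 := by
    apply ModuleCat.hom_ext
    apply LinearMap.ext
    intro r
    show x • (x • r) = 0
    rw [smul_eq_mul, smul_eq_mul, ← mul_assoc, hx2, zero_mul]
  -- the complex ... → R → R → R
  set K : ChainComplex (ModuleCat.{u} R) ℕ :=
    ChainComplex.of (fun _ => ModuleCat.of R R) (fun _ => δ) (fun _ => hδδ) with hK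
  have hd : ∀ n : ℕ, K.d (n + 1) n = δ := fun n => ChainComplex.of_d (fun _ => ModuleCat.of R R) (fun _ => δ) n
  have hd10 : K.d 1 0 = δ := hd 0
  have hd21 : K.d 2 1 = δ := hd 1
  have hproj : ∀ n, Projective (K.X n) := fun n =>
    (IsProjective.iff_projective _).1 inferInstance
  set gHom : K.X 0 ⟶ ModuleCat.of R M := ModuleCat.ofHom g with hgHom
  have hdg : K.d 1 0 ≫ gHom = 0 := by
    rw [hd10]
    apply ModuleCat.hom_ext
    apply LinearMap.ext
    intro a
    show g (x • a) = 0
    rw [smul_eq_mul]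
    exact hgx a
  set π : K ⟶ (ChainComplex.single₀ (ModuleCat.{u} R)).obj (ModuleCat.of R M) :=
    (ChainComplex.toSingle₀Equiv K (ModuleCat.of R M)).symm ⟨gHom, hdg⟩ with hπ
  have hπ0 : π.f 0 = gHom := ChainComplex.toSingle₀Equiv_symm_apply_f_zero gHom hdg
  have hqi : QuasiIso π := by
    constructor
    intro n
    match n with
    | 0 =>
      rw [ChainComplex.quasiIsoAt₀_iff, ShortComplex.quasiIso_iff_of_zeros']
      rotate_left
      · rfl
      · rfl
      · rfl
      constructor
      · rw [ShortComplex.moduleCat_exact_iff]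
        intro r hr
        dsimp at hr ⊢
        change (π.f 0) r = 0 at hr
        rw [hπ0] at hr
        obtain ⟨a, ha⟩ := hgker r hr
        refine ⟨a, ?_⟩
        change (K.d 1 0) a = r
        rw [hd10]
        show x • a = r
        rw [smul_eq_mul]
        exact ha
      · rw [ModuleCat.epi_iff_surjective]
        show Function.Surjective (π.f 0)
        rw [hπ0]
        exact hgsurj
    | (n + 1) =>
      rw [quasiIsoAt_iff_exactAt' π (n + 1) (ChainComplex.exactAt_succ_single_obj _ _)]
      rw [HomologicalComplex.exactAt_iff' K (n + 2) (n + 1) n (by simp) (by simp)]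
      rw [ShortComplex.moduleCat_exact_iff]
      intro r hr
      dsimp at hr ⊢
      change (K.d (n + 1) n) r = 0 at hr
      rw [hd n] at hr
      obtain ⟨a, ha⟩ := hann r hr
      refine ⟨a, ?_⟩
      change (K.d (n + 1 + 1) (n + 1)) a = r
      rw [hd (n + 1)]
      show x • a = r
      rw [smul_eq_mul]
      exact ha
  set P : ProjectiveResolution (ModuleCat.of R M) :=
    { complex := K
      projective := hproj
      π := π
      quasiIso := hqi }
  -- now compute Ext¹ via this resolution
  set F : ModuleCat.{u} R := ModuleCat.of R (ι →₀ R) with hF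
  have e := P.isoExt (R := R) 1 F
  set L : CochainComplex (ModuleCat.{u} R) ℕ := K.linearYonedaObj R F with hL
  have hzero : IsZero (L.homology 1) := by
    rw [← HomologicalComplex.exactAt_iff_isZero_homology]
    rw [HomologicalComplex.exactAt_iff' L 0 1 2 (by simp) (by simp)]
    rw [ShortComplex.moduleCat_exact_iff]
    intro φ₀ hφ₀
    let φ : ModuleCat.of R R ⟶ F := φ₀
    have hφ₁ : (L.d 1 2) φ₀ = 0 := hφ₀
    rw [ChainComplex.linearYonedaObj_d] at hφ₁
    have hφ' : K.d 2 1 ≫ φ = 0 := hφ₁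
    rw [hd21] at hφ'
    set q : ι →₀ R := φ (1 : R) with hq
    have hxq : x • q = 0 := by
      have h2 := congrArg (fun (ψ : ModuleCat.of R R ⟶ F) => ψ (1 : R)) hφ'
      dsimp at h2
      calc x • q = φ (x • (1 : R)) := (φ.hom.map_smul x (1 : R)).symm
        _ = 0 := h2
    -- choose a lift of each coordinate
    have hcomp : ∀ i : ι, x * q i = 0 := by
      intro i
      have := congrArg (fun (v : ι →₀ R) => v i) hxq
      simpa using this
    set lift : R → R := fun c => if hc : ∃ a : R, x * a = c then hc.choose else 0 with hlift
    have hlift0 : lift 0 = 0 ∨ x * lift 0 = 0 := by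
      by_cases hc : ∃ a : R, x * a = (0 : R)
      · right; simpa [hlift, hc] using hc.choose_spec
      · left; simp [hlift, hc]
    set lift' : R → R := fun c => if c = 0 then 0 else lift c with hlift'
    have hlift'0 : lift' 0 = 0 := by simp [hlift']
    set p : ι →₀ R := q.mapRange lift' hlift'0 with hp
    have hxp : x • p = q := by
      ext i
      rw [Finsupp.smul_apply, hp, Finsupp.mapRange_apply, smul_eq_mul]
      by_cases h0 : q i = 0
      · simp [hlift', h0]
      · have hc : ∃ a : R, x * a = q i := hann _ (hcomp i)
        rw [hlift']
        simp only [h0, if_false]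
        rw [hlift]
        simp only [hc, dif_pos]
        exact hc.choose_spec
    refine ⟨ModuleCat.ofHom (LinearMap.toSpanSingleton R (ι →₀ R) p), ?_⟩
    show (L.d 0 1) (ModuleCat.ofHom (LinearMap.toSpanSingleton R (ι →₀ R) p)) = φ₀
    rw [ChainComplex.linearYonedaObj_d]
    show K.d 1 0 ≫ ModuleCat.ofHom (LinearMap.toSpanSingleton R (ι →₀ R) p) = φ
    rw [hd10]
    apply ModuleCat.hom_ext
    apply LinearMap.ext
    intro r₀
    show (x * (show R from r₀)) • p = φ r₀
    calc (x * (show R from r₀)) • p = (show R from r₀) • (x • p) := by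
          rw [mul_comm, mul_smul]
      _ = (show R from r₀) • q := by rw [hxp]
      _ = φ ((show R from r₀) • (1 : R)) := (φ.hom.map_smul (show R from r₀) (1 : R)).symm
      _ = φ r₀ := by rw [smul_eq_mul, mul_one]
  exact subsingleton_of_isZero (IsZero.of_iso hzero e)

lemma extVanishes_of_retract (M : Type u) [AddCommGroup M] [Module R M]
    (Q F : ModuleCat.{u} R) (s : Q ⟶ F) (p : F ⟶ Q) (hsp : s ≫ p = 𝟙 Q)
    (h : Subsingleton (((Ext R (ModuleCat.{u} R) 1).obj
      (Opposite.op (ModuleCat.of R M))).obj F)) :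
    Subsingleton (((Ext R (ModuleCat.{u} R) 1).obj
      (Opposite.op (ModuleCat.of R M))).obj Q) := by
  set E := (Ext R (ModuleCat.{u} R) 1).obj (Opposite.op (ModuleCat.of R M)) with hE
  refine ⟨fun a b => ?_⟩
  have h1 : E.map s ≫ E.map p = 𝟙 (E.obj Q) := by
    rw [← E.map_comp, hsp, E.map_id]
  have ha : (E.map s ≫ E.map p) a = a := by rw [h1]; rfl
  have hb : (E.map s ≫ E.map p) b = b := by rw [h1]; rfl
  have hab : (E.map s) a = (E.map s) b := Subsingleton.elim _ _
  calc a = (E.map s ≫ E.map p) a := ha.symm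
    _ = (E.map p) ((E.map s) a) := rfl
    _ = (E.map p) ((E.map s) b) := by rw [hab]
    _ = (E.map s ≫ E.map p) b := rfl
    _ = b := hb

end Aux

/-- If the maximal ideal `m` of a local commutative ring `R` is its unique nonzero proper ideal,
then `m` is principal, `m² = 0`, and `m` is a strongly Gorenstein projective `R`-module. -/
theorem maximalIdeal_sgProjective_of_unique_ideal (R : Type u) [CommRing R] [IsLocalRing R]
    (hm : IsLocalRing.maximalIdeal R ≠ ⊥)
    (huniq : ∀ I : Ideal R, I ≠ ⊥ → I ≠ ⊤ → I = IsLocalRing.maximalIdeal R) :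
    (∃ x : R, IsLocalRing.maximalIdeal R = Ideal.span {x}) ∧
    IsLocalRing.maximalIdeal R ^ 2 = ⊥ ∧
    IsStronglyGorensteinProjective R (IsLocalRing.maximalIdeal R) := by
  classical
  set m := IsLocalRing.maximalIdeal R with hmdef
  obtain ⟨x, hxm, hx0⟩ := (Submodule.ne_bot_iff m).1 hm
  have hxnu : ¬IsUnit x := hxm
  have hspan : Ideal.span {x} = m := by
    refine huniq _ ?_ ?_
    · rw [Ne, Ideal.span_singleton_eq_bot]
      exact hx0
    · exact Ideal.span_singleton_ne_top hxnu
  have hmne : m ≠ ⊤ := Ideal.IsMaximal.ne_top (IsLocalRing.maximalIdeal.isMaximal R)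
  have hunit : ∀ r : R, r ∉ m → IsUnit r := fun r hr => by
    by_contra hu
    exact hr hu
  have hsq : m ^ 2 = ⊥ := by
    by_contra hne
    have h2top : m ^ 2 ≠ ⊤ := by
      intro h
      exact hmne (top_le_iff.1 (h ▸ (Ideal.pow_le_self (by norm_num) : m ^ 2 ≤ m)))
    have h2 : m ^ 2 = m := huniq _ hne h2top
    have hx2 : x ∈ Ideal.span {x ^ 2} := by
      rw [← Ideal.span_singleton_pow, hspan, h2]
      exact hxm
    obtain ⟨c, hc⟩ := Ideal.mem_span_singleton'.1 hx2
    -- hc : c * x ^ 2 = x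
    have hcx : x * (c * x) ∈ m := Ideal.mul_mem_left _ _ (Ideal.mul_mem_left _ _ hxm)
    have hu : IsUnit (1 - c * x) := by
      by_contra hu
      have h1m : (1 : R) - c * x ∈ m := hu
      have : (1 : R) ∈ m := by
        have := m.add_mem h1m (Ideal.mul_mem_left _ c hxm)
        simpa using this
      exact hmne (m.eq_top_of_isUnit_mem this isUnit_one)
    have hx00 : x * (1 - c * x) = 0 := by
      ring_nf
      ring_nf at hc
      rw [mul_comm] at hc
      linear_combination -hc
    exact hx0 ((hu.mul_left_eq_zero).1 hx00)
  have hxx : x * x = 0 := by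
    have : x * x ∈ m ^ 2 := by
      rw [pow_two]
      exact Ideal.mul_mem_mul hxm hxm
    rwa [hsq, Ideal.mem_bot] at this
  have hmem : ∀ r : R, x * r = 0 ↔ r ∈ m := by
    intro r
    constructor
    · intro h
      by_contra hr
      exact hx0 (((hunit r hr).mul_left_eq_zero).1 h)
    · intro h
      have : x * r ∈ m ^ 2 := by
        rw [pow_two]
        exact Ideal.mul_mem_mul hxm h
      rwa [hsq, Ideal.mem_bot] at this
  have hann : ∀ r : R, x * r = 0 → ∃ a : R, x * a = r := by
    intro r h
    have hr : r ∈ Ideal.span {x} := hspan.symm ▸ (hmem r).1 h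
    obtain ⟨a, ha⟩ := Ideal.mem_span_singleton'.1 hr
    exact ⟨a, by rw [mul_comm]; exact ha⟩
  -- the surjection g : R → m, r ↦ r • x
  set xm : m := ⟨x, hxm⟩ with hxmdef
  set g : R →ₗ[R] m := LinearMap.toSpanSingleton R m xm with hg
  have hgsurj : Function.Surjective g := by
    rintro ⟨y, hy⟩
    have : y ∈ Ideal.span {x} := hspan.symm ▸ hy
    obtain ⟨a, ha⟩ := Ideal.mem_span_singleton'.1 this
    exact ⟨a, Subtype.ext ha⟩
  have hgx : ∀ a : R, g (x * a) = 0 := by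
    intro a
    apply Subtype.ext
    show (x * a) * x = (0 : R)
    rw [mul_comm x a, mul_assoc, hxx, mul_zero]
  have hgker : ∀ r : R, g r = 0 → ∃ a : R, x * a = r := by
    intro r h
    have h2 : r * x = 0 := congrArg Subtype.val h
    exact hann r (by rwa [mul_comm] at h2)
  refine ⟨⟨x, hspan.symm⟩, ?_, ?_, ?_⟩
  · exact hsq
  · -- the short exact sequence 0 → m → R → m → 0
    refine ⟨ModuleCat.of R R, m.subtype, g, ?_, Submodule.injective_subtype m, hgsurj, ?_⟩
    · exact (inferInstance : Module.Projective R R)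
    · apply le_antisymm
      · rintro r ⟨⟨y, hy⟩, rfl⟩
        show g y = 0
        apply Subtype.ext
        show y * x = (0 : R)
        rw [mul_comm]
        exact (hmem y).2 hy
      · intro r hr
        have h0 : g (show R from r) = 0 := hr
        have h2 : (show R from r) * x = 0 := congrArg Subtype.val h0
        have hrm : (show R from r) ∈ m := (hmem _).1 (by rwa [mul_comm] at h2)
        exact ⟨⟨(show R from r), hrm⟩, rfl⟩
  · -- Ext vanishing for projective modules
    intro Q hQ
    obtain ⟨s, hs⟩ := hQ.out
    have hfree : extVanishes R 1 m ((Q : Type u) →₀ R) :=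
      extVanishes_free x hxx hann m g hgsurj hgx hgker (Q : Type u)
    show Subsingleton _
    refine extVanishes_of_retract (↥m) (ModuleCat.of R (Q : Type u))
      (ModuleCat.of R ((Q : Type u) →₀ R))
      (ModuleCat.ofHom s) (ModuleCat.ofHom (Finsupp.linearCombination R _root_.id)) ?_ hfree
    apply ModuleCat.hom_ext
    apply LinearMap.ext
    intro q
    exact hs q
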